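/- Let G be a D-regular graph on N vertices with second eigenvalue λ < D. For every vertex set A ⊂ V, the vertex boundary ∂(A) = {v ∉ A : v has a neighbor in A} satisfies |∂(A)| ≥ min( (N−|A|)(D−λ)/(2D), (|A|/4)·(1−|A|/N)²·(D/λ − 1)² ). -/

import Mathlib

open Matrix

theorem stmt_9 {V : Type*} [Fintype V] [DecidableEq V] [Nonempty V]
    (G : SimpleGraph V) [DecidableRel G.Adj] (D : ℕ) (hreg : G.IsRegularOfDegree D)
    (lam : ℝ) (hlam0 : 0 < lam) (hlamD : lam < D)
    (hlam : ∀ x y : V → ℝ, (∑ v, x v) = 0 → (∑ v, y v) = 0 →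
      abs (x ⬝ᵥ (G.adjMatrix ℝ).mulVec y) ≤ lam * Real.sqrt (x ⬝ᵥ x) * Real.sqrt (y ⬝ᵥ y))
    (A : Finset V) :
    min (((Fintype.card V : ℝ) - A.card) * ((D : ℝ) - lam) / (2 * D))
        ((A.card : ℝ) / 4 * (1 - (A.card : ℝ) / (Fintype.card V : ℝ)) ^ 2
          * ((D : ℝ) / lam - 1) ^ 2) ≤
      ((Finset.univ.filter (fun v => v ∉ A ∧ ∃ u ∈ A, G.Adj u v)).card : ℝ) := by
  classical
  set M := G.adjMatrix ℝ with hM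
  set n : ℝ := (Fintype.card V : ℝ) with hn
  have hn0 : 0 < n := by
    have := Fintype.card_pos (α := V); positivity
  set B := Finset.univ.filter (fun v => v ∉ A ∧ ∃ u ∈ A, G.Adj u v) with hBdef
  set s : ℝ := (A.card : ℝ) with hs
  set b : ℝ := (B.card : ℝ) with hb
  have hD0 : (0:ℝ) < D := lt_trans hlam0 hlamD
  have hs0 : 0 ≤ s := by positivity
  have hb0 : 0 ≤ b := by positivity
  have hsn : s ≤ n := by
    exact_mod_cast Nat.cast_le.mpr (Finset.card_le_univ A)
  have rowsum : ∀ u, ∑ v, M u v = D := by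
    intro u
    simpa [hM, SimpleGraph.degree, SimpleGraph.neighborFinset] using
      congrArg (Nat.cast : ℕ → ℝ) (hreg u)
  have colsum : ∀ u, ∑ v, M v u = D := by
    intro u
    simp only [hM, SimpleGraph.adjMatrix_apply]
    rw [Finset.sum_congr rfl (fun v _ => if_congr (G.adj_comm v u) rfl rfl)]
    simpa [SimpleGraph.degree, SimpleGraph.neighborFinset] using
      congrArg (Nat.cast : ℕ → ℝ) (hreg u)
  -- centered indicator
  set x : Finset V → V → ℝ := fun P v => (if v ∈ P then 1 else 0) - (P.card : ℝ) / n
    with hx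
  have hsum : ∀ P : Finset V, ∑ v, x P v = 0 := by
    intro P
    simp only [hx, Finset.sum_sub_distrib, Finset.sum_boole, Finset.sum_const,
      Finset.card_univ, nsmul_eq_mul]
    rw [← hn]
    field_simp
    simp
  have hdotself : ∀ P : Finset V, x P ⬝ᵥ x P = (P.card : ℝ) - (P.card : ℝ)^2 / n := by
    intro P
    have h1 : ∀ v, x P v * x P v
        = (if v ∈ P then 1 else 0) - 2 * ((P.card : ℝ)/n) * (if v ∈ P then 1 else 0)
          + ((P.card : ℝ)/n)^2 := by
      intro v; simp only [hx]; split_ifs <;> ring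
    simp only [dotProduct, h1, Finset.sum_add_distrib, Finset.sum_sub_distrib,
      Finset.sum_boole, Finset.sum_const, Finset.card_univ, nsmul_eq_mul, ← hn,
      ← Finset.mul_sum]
    have : Finset.card (Finset.filter (fun v => v ∈ P) Finset.univ) = P.card := by
      simp
    rw [this]
    field_simp
    ring
  -- expansion of the quadratic form
  set E : Finset V → Finset V → ℝ := fun P Q => ∑ u ∈ P, ∑ v ∈ Q, M u v with hE
  have expand : ∀ P Q : Finset V,
      x P ⬝ᵥ M.mulVec (x Q) = E P Q - D * P.card * Q.card / n := by
    intro P Q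
    have inner : ∀ u, ∑ v, M u v * x Q v = (∑ v ∈ Q, M u v) - (Q.card : ℝ)/n * D := by
      intro u
      simp only [hx, mul_sub, Finset.sum_sub_distrib]
      congr 1
      · simp [mul_ite, mul_one, mul_zero, Finset.sum_ite_eq, Finset.sum_ite_mem,
          Finset.univ_inter]
      · rw [← Finset.sum_mul, rowsum u]; ring
    have : x P ⬝ᵥ M.mulVec (x Q) = ∑ u, x P u * ((∑ v ∈ Q, M u v) - (Q.card : ℝ)/n * D) := by
      simp only [dotProduct, mulVec, dotProduct]
      exact Finset.sum_congr rfl (fun u _ => by rw [inner u])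
    rw [this]
    simp only [mul_sub, Finset.sum_sub_distrib, ← Finset.sum_mul, hsum P, zero_mul,
      sub_zero]
    have h2 : ∑ u, x P u * (∑ v ∈ Q, M u v)
        = E P Q - (P.card : ℝ)/n * (Q.card : ℝ) * D := by
      simp only [hx, sub_mul, Finset.sum_sub_distrib]
      congr 1
      · simp [ite_mul, one_mul, zero_mul, Finset.sum_ite_mem, Finset.univ_inter, hE]
      · have hcomm : ∑ i, ∑ v ∈ Q, M i v = ∑ v ∈ Q, ∑ i, M i v := Finset.sum_comm
        rw [← Finset.mul_sum, hcomm]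
        rw [Finset.sum_congr rfl (fun v _ => colsum v), Finset.sum_const, nsmul_eq_mul]
        ring
    rw [h2]
    ring
  -- mixing lemma
  have mixing : ∀ P Q : Finset V,
      |E P Q - D * P.card * Q.card / n| ≤
        lam * Real.sqrt (P.card) * Real.sqrt (Q.card) := by
    intro P Q
    have h := hlam (x P) (x Q) (hsum P) (hsum Q)
    rw [expand P Q] at h
    refine h.trans ?_
    have hle : ∀ R : Finset V, Real.sqrt (x R ⬝ᵥ x R) ≤ Real.sqrt (R.card : ℝ) := by
      intro R
      apply Real.sqrt_le_sqrt
      rw [hdotself R]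
      have : 0 ≤ (R.card : ℝ)^2 / n := by positivity
      linarith
    have h1 := hle P
    have h2 := hle Q
    calc lam * Real.sqrt (x P ⬝ᵥ x P) * Real.sqrt (x Q ⬝ᵥ x Q)
        ≤ lam * Real.sqrt (P.card : ℝ) * Real.sqrt (Q.card : ℝ) := by
          exact mul_le_mul (mul_le_mul_of_nonneg_left h1 hlam0.le) h2
            (Real.sqrt_nonneg _) (by positivity)
      _ = _ := rfl
  -- E A Aᶜ = D*s - E A A
  have split : E A (Finset.univ \ A) = D * s - E A A := by
    have : ∀ u, ∑ v ∈ Finset.univ \ A, M u v = D - ∑ v ∈ A, M u v := by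
      intro u
      rw [eq_sub_iff_add_eq, Finset.sum_sdiff_eq_sub (Finset.subset_univ A)]
      rw [rowsum u]; ring
    simp only [hE, this, Finset.sum_sub_distrib, Finset.sum_const, nsmul_eq_mul]
    rw [← hs]; ring
  -- E A Aᶜ = E A B
  have hBsub : B ⊆ Finset.univ \ A := by
    intro v hv
    simp only [hBdef, Finset.mem_filter] at hv
    simp [hv.2.1]
  have eq_bd : E A (Finset.univ \ A) = E A B := by
    simp only [hE]
    have c1 : ∑ u ∈ A, ∑ v ∈ Finset.univ \ A, M u v = ∑ v ∈ Finset.univ \ A, ∑ u ∈ A, M u v :=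
      Finset.sum_comm
    have c2 : ∑ u ∈ A, ∑ v ∈ B, M u v = ∑ v ∈ B, ∑ u ∈ A, M u v := Finset.sum_comm
    rw [c1, c2]
    rw [← Finset.sum_sdiff hBsub]
    have : ∀ v ∈ (Finset.univ \ A) \ B, ∑ u ∈ A, M u v = 0 := by
      intro v hv
      rw [Finset.mem_sdiff] at hv
      have hvA : v ∉ A := (Finset.mem_sdiff.mp hv.1).2
      have hvB : v ∉ B := hv.2
      apply Finset.sum_eq_zero
      intro u hu
      simp only [hM, SimpleGraph.adjMatrix_apply]
      rw [if_neg]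
      intro hadj
      exact hvB (Finset.mem_filter.mpr ⟨Finset.mem_univ v, hvA, u, hu, hadj⟩)
    rw [Finset.sum_eq_zero this, zero_add]
  -- lower bound on E A Aᶜ
  have lower : s * (n - s) / n * ((D:ℝ) - lam) ≤ E A (Finset.univ \ A) := by
    have h := hlam (x A) (x A) (hsum A) (hsum A)
    rw [expand A A] at h
    have hxx : x A ⬝ᵥ x A = s - s^2/n := hdotself A
    have hnns : 0 ≤ s - s^2/n := by
      have : s^2/n ≤ s := by rw [div_le_iff₀ hn0]; nlinarith
      linarith
    have hss : Real.sqrt (x A ⬝ᵥ x A) * Real.sqrt (x A ⬝ᵥ x A) = s - s^2/n := by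
      rw [hxx]; exact Real.mul_self_sqrt hnns
    have hEA : E A A ≤ D * s * s / n + lam * (s - s^2/n) := by
      have h2 := (abs_le.mp h).2
      have : lam * Real.sqrt (x A ⬝ᵥ x A) * Real.sqrt (x A ⬝ᵥ x A) = lam * (s - s^2/n) := by
        rw [mul_assoc, hss]
      rw [← hs] at h2
      linarith [h2.trans_eq this]
    rw [split]
    have heq : s * (n - s) / n * ((D:ℝ) - lam)
        = D * s - (D * s * s / n + lam * (s - s^2/n)) := by
      field_simp
      ring
    linarith
  -- upper bound on E A B
  have upper : E A B ≤ D * s * b / n + lam * Real.sqrt s * Real.sqrt b := by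
    have h := (abs_le.mp (mixing A B)).2
    rw [← hs, ← hb] at h
    linarith
  -- main inequality
  have main : s * (n - s) / n * ((D:ℝ) - lam) ≤ D * s * b / n + lam * Real.sqrt s * Real.sqrt b := by
    calc s * (n - s) / n * ((D:ℝ) - lam) ≤ E A (Finset.univ \ A) := lower
      _ = E A B := eq_bd
      _ ≤ _ := upper
  clear hlam expand mixing split eq_bd lower upper hsum hdotself rowsum colsum hBsub hx hE hM hreg hBdef
  clear x E M
  clear_value n s b
  rcases eq_or_lt_of_le hs0 with hse | hspos
  · -- s = 0
    have h0 : s / 4 * (1 - s / n) ^ 2 * ((D : ℝ) / lam - 1) ^ 2 = 0 := by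
      rw [← hse]; ring
    calc min ((n - s) * ((D : ℝ) - lam) / (2 * D))
          (s / 4 * (1 - s / n) ^ 2 * ((D : ℝ) / lam - 1) ^ 2)
        ≤ s / 4 * (1 - s / n) ^ 2 * ((D : ℝ) / lam - 1) ^ 2 := min_le_right _ _
      _ = 0 := h0
      _ ≤ b := hb0
  · by_cases hcase : lam * Real.sqrt s * Real.sqrt b ≤ D * s * b / n
    · -- first bound
      refine le_trans (min_le_left _ _) ?_
      rw [div_le_iff₀ (by positivity)]
      have h2 : s * (n - s) / n * ((D:ℝ) - lam) ≤ 2 * (D * s * b / n) := by linarith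
      have h3 : s * (n - s) * ((D:ℝ) - lam) ≤ 2 * (D * s * b) := by
        rw [div_mul_eq_mul_div, div_le_iff₀ hn0] at h2
        have e : 2 * ((D:ℝ) * s * b / n) * n = 2 * ((D:ℝ) * s * b) := by
          field_simp
        linarith
      nlinarith
    · -- second bound
      refine le_trans (min_le_right _ _) ?_
      push_neg at hcase
      have h2 : s * (n - s) / n * ((D:ℝ) - lam) ≤ 2 * (lam * Real.sqrt s * Real.sqrt b) := by
        linarith
      have hsq : Real.sqrt s * Real.sqrt s = s := Real.mul_self_sqrt hs0
      have hsqs : 0 < Real.sqrt s := Real.sqrt_pos.mpr hspos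
      -- √s * (1 - s/n) * (D - lam) ≤ 2 lam √b
      have h3 : Real.sqrt s * ((1 - s/n) * ((D:ℝ) - lam)) ≤ 2 * lam * Real.sqrt b := by
        have heq : s * (n - s) / n = Real.sqrt s * Real.sqrt s * (1 - s/n) := by
          rw [hsq]; field_simp
        rw [heq] at h2
        have h4 : Real.sqrt s * (Real.sqrt s * ((1 - s/n) * ((D:ℝ) - lam)))
            ≤ Real.sqrt s * (2 * lam * Real.sqrt b) := by
          have e1 : Real.sqrt s * (Real.sqrt s * ((1 - s/n) * ((D:ℝ) - lam)))
              = Real.sqrt s * Real.sqrt s * (1 - s/n) * ((D:ℝ) - lam) := by ring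
          have e2 : Real.sqrt s * (2 * lam * Real.sqrt b)
              = 2 * (lam * Real.sqrt s * Real.sqrt b) := by ring
          rw [e1, e2]; exact h2
        exact le_of_mul_le_mul_left h4 hsqs
      set c : ℝ := Real.sqrt s * ((1 - s/n) * ((D:ℝ) - lam)) / (2 * lam) with hc
      have hc0 : 0 ≤ c := by
        have h1n : 0 ≤ 1 - s/n := by
          have := div_le_one_of_le₀ hsn hn0.le; linarith
        have : 0 ≤ (D:ℝ) - lam := by linarith
        positivity
      have hcb : c ≤ Real.sqrt b := by
        rw [hc, div_le_iff₀ (by positivity)]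
        linarith
      have hfinal : c^2 ≤ b := by
        have := mul_le_mul hcb hcb hc0 (Real.sqrt_nonneg b)
        rw [Real.mul_self_sqrt hb0] at this
        rw [pow_two]; exact this
      refine le_trans (le_of_eq ?_) hfinal
      rw [hc]
      rw [div_pow, mul_pow, mul_pow, mul_pow]
      have : Real.sqrt s ^ 2 = s := Real.sq_sqrt hs0
      rw [this]
      field_simp
      ring
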